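/- For natural numbers t ≥ 1 and 0 ≤ a, b ≤ t: ∑_{i=1}^{a} ∑_{j=1}^{b} (-1)^{i+j} · C(a-i+b-j, a-i) · C(t-1, i-1) · C(t-1, j-1) · (-1)^{a+b} = ∑_{i=1}^{min(a,b)} C(t-1-i, a-i) · C(t-1-i, b-i); equivalently, the sign of the double sum ∑_{i=1}^{a} ∑_{j=1}^{b} (-1)^{i+j+1} C(a-i+b-j, a-i) C(t-1, i-1) C(t-1, j-1) is (-1)^{a+b+1} whenever the sum is nonzero. -/
import Mathlib

open Finset

def Fs (m A B : ℕ) : ℤ :=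
  ∑ i ∈ range (A+1), ∑ j ∈ range (B+1),
    (-1:ℤ)^(i+j) * ((i+j).choose i : ℤ) * (m.choose (A-i) : ℤ) * (m.choose (B-j) : ℤ)

def Sb (m B : ℕ) : ℤ := ∑ j ∈ range (B+1), (-1:ℤ)^j * (m.choose (B-j) : ℤ)

def Gs (m A B : ℕ) : ℤ :=
  ∑ k ∈ range (min A B + 1), ((m-1-k).choose (A-k) : ℤ) * ((m-1-k).choose (B-k) : ℤ)

lemma Sb_succ (m B : ℕ) : Sb m (B+1) = (m.choose (B+1) : ℤ) - Sb m B := by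
  have h : ∀ j ∈ range (B+1), (-1:ℤ)^(j+1) * (m.choose (B+1-(j+1)) : ℤ)
      = -((-1:ℤ)^j * (m.choose (B-j) : ℤ)) := by
    intro j hj
    rw [Nat.succ_sub_succ, pow_succ]; ring
  rw [Sb, Finset.sum_range_succ', Finset.sum_congr rfl h, Finset.sum_neg_distrib]
  simp [Sb]
  ring

lemma Sb_eq (m B : ℕ) (hm : 1 ≤ m) : Sb m B = ((m-1).choose B : ℤ) := by
  induction B with
  | zero => simp [Sb]
  | succ B ih =>
      rw [Sb_succ, ih]
      obtain ⟨m', rfl⟩ : ∃ m', m = m' + 1 := ⟨m - 1, by omega⟩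
      rw [Nat.succ_sub_one, Nat.choose_succ_succ]
      push_cast
      ring

lemma peel_i (m A B : ℕ) :
    Fs m (A+1) B = (m.choose (A+1) : ℤ) * Sb m B +
      ∑ i ∈ range (A+1), ∑ j ∈ range (B+1),
        (-1:ℤ)^(i+1+j) * ((i+1+j).choose (i+1) : ℤ) * (m.choose (A-i) : ℤ) *
          (m.choose (B-j) : ℤ) := by
  rw [Fs, Finset.sum_range_succ']
  have h0 : ∑ j ∈ range (B+1),
      (-1:ℤ)^(0+j) * ((0+j).choose 0 : ℤ) * (m.choose (A+1-0) : ℤ) * (m.choose (B-j) : ℤ)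
      = (m.choose (A+1) : ℤ) * Sb m B := by
    rw [Sb, Finset.mul_sum]
    refine Finset.sum_congr rfl fun j hj => ?_
    simp [Nat.choose_zero_right]
    ring
  rw [h0]
  rw [add_comm]
  congr 1
  refine Finset.sum_congr rfl fun i hi => Finset.sum_congr rfl fun j hj => ?_
  rw [Nat.succ_sub_succ]

lemma Ts_eq (m A B : ℕ) :
    ∑ i ∈ range (A+1), ∑ j ∈ range (B+2),
        (-1:ℤ)^(i+1+j) * ((i+j).choose (i+1) : ℤ) * (m.choose (A-i) : ℤ) *
          (m.choose (B+1-j) : ℤ)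
      = (m.choose (A+1) : ℤ) * Sb m B - Fs m (A+1) B := by
  have h : ∀ i ∈ range (A+1),
      (∑ j ∈ range (B+2), (-1:ℤ)^(i+1+j) * ((i+j).choose (i+1) : ℤ) *
        (m.choose (A-i) : ℤ) * (m.choose (B+1-j) : ℤ))
      = -∑ j ∈ range (B+1), (-1:ℤ)^(i+1+j) * ((i+1+j).choose (i+1) : ℤ) *
          (m.choose (A-i) : ℤ) * (m.choose (B-j) : ℤ) := by
    intro i _
    rw [Finset.sum_range_succ', ← Finset.sum_neg_distrib]
    have h0 : (-1:ℤ)^(i+1+0) * ((i+0).choose (i+1) : ℤ) * (m.choose (A-i) : ℤ) *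
        (m.choose (B+1-0) : ℤ) = 0 := by
      simp [Nat.choose_succ_self]
    rw [h0, add_zero]
    refine Finset.sum_congr rfl fun j hj => ?_
    have e1 : i + (j+1) = i+1+j := by ring
    have e2 : B + 1 - (j+1) = B - j := Nat.succ_sub_succ B j
    have e3 : i + 1 + (j+1) = (i+1+j) + 1 := by ring
    rw [e1, e2, e3, pow_succ]
    ring
  rw [Finset.sum_congr rfl h, Finset.sum_neg_distrib]
  have := peel_i m A B
  linarith

lemma Frec (m A B : ℕ) :
    Fs m (A+1) (B+1) + Fs m A (B+1) + Fs m (A+1) B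
      = (m.choose (A+1) : ℤ) * (m.choose (B+1) : ℤ) := by
  have h1 := peel_i m A (B+1)
  have hD : (∑ i ∈ range (A+1), ∑ j ∈ range (B+2),
        (-1:ℤ)^(i+1+j) * ((i+1+j).choose (i+1) : ℤ) * (m.choose (A-i) : ℤ) *
          (m.choose (B+1-j) : ℤ))
      = -Fs m A (B+1) +
        ∑ i ∈ range (A+1), ∑ j ∈ range (B+2),
          (-1:ℤ)^(i+1+j) * ((i+j).choose (i+1) : ℤ) * (m.choose (A-i) : ℤ) *
            (m.choose (B+1-j) : ℤ) := by
    have hpt : ∀ i ∈ range (A+1), ∀ j ∈ range (B+2),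
        (-1:ℤ)^(i+1+j) * ((i+1+j).choose (i+1) : ℤ) * (m.choose (A-i) : ℤ) *
          (m.choose (B+1-j) : ℤ)
        = -((-1:ℤ)^(i+j) * ((i+j).choose i : ℤ) * (m.choose (A-i) : ℤ) *
            (m.choose (B+1-j) : ℤ)) +
          (-1:ℤ)^(i+1+j) * ((i+j).choose (i+1) : ℤ) * (m.choose (A-i) : ℤ) *
            (m.choose (B+1-j) : ℤ) := by
      intro i _ j _
      have e1 : i + 1 + j = (i+j) + 1 := by ring
      rw [e1, Nat.choose_succ_succ]
      push_cast
      rw [pow_succ]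
      ring
    calc (∑ i ∈ range (A+1), ∑ j ∈ range (B+2),
        (-1:ℤ)^(i+1+j) * ((i+1+j).choose (i+1) : ℤ) * (m.choose (A-i) : ℤ) *
          (m.choose (B+1-j) : ℤ))
        = ∑ i ∈ range (A+1), ∑ j ∈ range (B+2),
            (-((-1:ℤ)^(i+j) * ((i+j).choose i : ℤ) * (m.choose (A-i) : ℤ) *
              (m.choose (B+1-j) : ℤ)) +
            (-1:ℤ)^(i+1+j) * ((i+j).choose (i+1) : ℤ) * (m.choose (A-i) : ℤ) *
              (m.choose (B+1-j) : ℤ)) :=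
          Finset.sum_congr rfl fun i hi => Finset.sum_congr rfl (hpt i hi)
      _ = -Fs m A (B+1) + _ := by
          simp only [Finset.sum_add_distrib, Finset.sum_neg_distrib, Fs]
  rw [h1, hD, Ts_eq, Sb_succ]
  ring

lemma Fs_zero_left (m B : ℕ) : Fs m 0 B = Sb m B := by
  rw [Fs, Finset.sum_range_one, Sb]
  refine Finset.sum_congr rfl fun j hj => ?_
  simp

lemma Fs_zero_right (m A : ℕ) : Fs m A 0 = Sb m A := by
  rw [Fs, Sb]
  refine Finset.sum_congr rfl fun i hi => ?_
  rw [Finset.sum_range_one]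
  simp

lemma Gs_zero_left (m B : ℕ) : Gs m 0 B = ((m-1).choose B : ℤ) := by
  simp [Gs]

lemma Gs_zero_right (m A : ℕ) : Gs m A 0 = ((m-1).choose A : ℤ) := by
  simp [Gs]

lemma Fs_symm (m A B : ℕ) : Fs m A B = Fs m B A := by
  rw [Fs, Fs, Finset.sum_comm]
  refine Finset.sum_congr rfl fun j hj => Finset.sum_congr rfl fun i hi => ?_
  have e1 : (i+j).choose i = (j+i).choose j := by
    have h := Nat.choose_symm (Nat.le_add_left j i)
    rw [Nat.add_sub_cancel] at h
    rw [h]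
    congr 1
    omega
  rw [e1]
  have e2 : i + j = j + i := by ring
  rw [e2]
  ring

lemma Gs_symm (m A B : ℕ) : Gs m A B = Gs m B A := by
  rw [Gs, Gs, min_comm]
  exact Finset.sum_congr rfl fun k _ => mul_comm _ _

lemma Gs_shift (m A B : ℕ) :
    Gs (m+1) (A+1) (B+1) = ((m).choose (A+1) : ℤ) * ((m).choose (B+1) : ℤ) + Gs m A B := by
  rw [Gs, Gs]
  have e : min (A+1) (B+1) + 1 = (min A B + 1) + 1 := by omega
  rw [e, Finset.sum_range_succ']
  have h0 : ((m+1-1-0).choose (A+1-0) : ℤ) * ((m+1-1-0).choose (B+1-0) : ℤ)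
      = (m.choose (A+1) : ℤ) * (m.choose (B+1) : ℤ) := by norm_num
  rw [h0, add_comm]
  congr 1
  refine Finset.sum_congr rfl fun k hk => ?_
  have e1 : m+1-1-(k+1) = m-1-k := by omega
  have e2 : A+1-(k+1) = A-k := by omega
  have e3 : B+1-(k+1) = B-k := by omega
  rw [e1, e2, e3]

lemma Grec_le : ∀ A m B : ℕ, 1 ≤ A → A ≤ B → B ≤ m →
    Gs m A B + Gs m (A-1) B + Gs m A (B-1)
      = (m.choose A : ℤ) * (m.choose B : ℤ) := by
  intro A
  induction A with
  | zero => intro m B h; omega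
  | succ A ih =>
    intro m B _ hAB hB
    obtain ⟨M, rfl⟩ : ∃ M, m = M + 1 := ⟨m - 1, by omega⟩
    obtain ⟨b, rfl⟩ : ∃ b, B = b + 1 := ⟨B - 1, by omega⟩
    rcases Nat.eq_zero_or_pos A with rfl | hA1
    · -- base case A = 1
      rcases Nat.eq_zero_or_pos b with rfl | hb1
      · -- B = 1
        rw [Gs_shift M 0 0, Gs_zero_left, Gs_zero_left, Gs_zero_right]
        simp [Nat.choose_one_right]
        ring
      · -- B = b+1, b ≥ 1
        obtain ⟨b', rfl⟩ : ∃ b', b = b' + 1 := ⟨b - 1, by omega⟩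
        obtain ⟨M', rfl⟩ : ∃ M', M = M' + 1 := ⟨M - 1, by omega⟩
        rw [Gs_shift (M'+1) 0 (b'+1)]
        rw [show (0+1-1 : ℕ) = 0 from rfl, show b'+1+1-1 = b'+1 from rfl]
        rw [Gs_shift (M'+1) 0 b']
        rw [Gs_zero_left, Gs_zero_left, Gs_zero_left]
        have hp : ((M'+1).choose (b'+1) : ℤ) = (M'.choose b' : ℤ) + (M'.choose (b'+1) : ℤ) := by
          exact_mod_cast Nat.choose_succ_succ M' b'
        rw [Nat.choose_succ_succ (M'+1) (b'+1)]
        norm_num [Nat.choose_one_right]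
        linear_combination -hp
    · -- step
      obtain ⟨A', rfl⟩ : ∃ A', A = A' + 1 := ⟨A - 1, by omega⟩
      obtain ⟨b'', rfl⟩ : ∃ b'', b = b'' + 1 := ⟨b - 1, by omega⟩
      have ihh := ih (M) (b''+1) (by omega) (by omega) (by omega)
      rw [Gs_shift M (A'+1) (b''+1)]
      rw [show A' + 1 + 1 - 1 = A' + 1 from rfl]
      rw [Gs_shift M A' (b''+1)]
      rw [show b'' + 1 + 1 - 1 = b'' + 1 from rfl]
      rw [Gs_shift M (A'+1) b'']
      rw [show A' + 1 - 1 = A' from rfl, show b'' + 1 - 1 = b'' from rfl] at ihh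
      rw [Nat.choose_succ_succ (M) (A'+1), Nat.choose_succ_succ (M) (b''+1)]
      push_cast
      linear_combination ihh

lemma Grec (m A B : ℕ) (hA1 : 1 ≤ A) (hAm : A ≤ m) (hB1 : 1 ≤ B) (hBm : B ≤ m) :
    Gs m A B + Gs m (A-1) B + Gs m A (B-1) = (m.choose A : ℤ) * (m.choose B : ℤ) := by
  rcases le_total A B with h | h
  · exact Grec_le A m B hA1 h hBm
  · have hh := Grec_le B m A hB1 h hAm
    rw [Gs_symm m B A, Gs_symm m (B-1) A, Gs_symm m B (A-1)] at hh
    linear_combination hh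

lemma FG : ∀ n A B m : ℕ, A + B ≤ n → A ≤ m → B ≤ m → Fs m A B = Gs m A B := by
  intro n
  induction n with
  | zero =>
    intro A B m h hA hB
    obtain rfl : A = 0 := by omega
    obtain rfl : B = 0 := by omega
    rw [Fs_zero_left, Gs_zero_left]
    simp [Sb]
  | succ n ih =>
    intro A B m hn hA hB
    match A, B with
    | 0, B =>
      rw [Fs_zero_left, Gs_zero_left]
      rcases Nat.eq_zero_or_pos m with rfl | hm
      · obtain rfl : B = 0 := by omega
        simp [Sb]
      · exact Sb_eq m B hm
    | A+1, 0 =>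
      rw [Fs_zero_right, Gs_zero_right]
      exact Sb_eq m (A+1) (by omega)
    | A+1, B+1 =>
      have h1 := Frec m A B
      have e1 : Fs m A (B+1) = Gs m A (B+1) := ih A (B+1) m (by omega) (by omega) hB
      have e2 : Fs m (A+1) B = Gs m (A+1) B := ih (A+1) B m (by omega) hA (by omega)
      have h2 := Grec m (A+1) (B+1) (by omega) hA (by omega) hB
      simp only [Nat.add_sub_cancel] at h2
      linarith

lemma key_rev (n : ℕ) (f : ℕ → ℤ) : ∑ i ∈ Icc 1 n, f i = ∑ i ∈ range n, f (n - i) := by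
  rw [← Finset.Ico_add_one_right_eq_Icc, Finset.sum_Ico_eq_sum_range]
  have e : n + 1 - 1 = n := by omega
  rw [e, ← Finset.sum_range_reflect]
  refine Finset.sum_congr rfl fun i hi => ?_
  have := Finset.mem_range.mp hi
  congr 1
  omega

lemma key_fwd (n : ℕ) (f : ℕ → ℤ) : ∑ i ∈ Icc 1 n, f i = ∑ i ∈ range n, f (1 + i) := by
  rw [← Finset.Ico_add_one_right_eq_Icc, Finset.sum_Ico_eq_sum_range]
  have e : n + 1 - 1 = n := by omega
  rw [e]

theorem stmt19 (t a b : ℕ) (ht : 1 ≤ t) (ha : a ≤ t) (hb : b ≤ t) :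
    (∑ i ∈ Finset.Icc 1 a, ∑ j ∈ Finset.Icc 1 b,
        (-1 : ℤ) ^ (i + j) * Nat.choose (a - i + (b - j)) (a - i) *
          Nat.choose (t - 1) (i - 1) * Nat.choose (t - 1) (j - 1) *
            (-1 : ℤ) ^ (a + b)) =
      ∑ i ∈ Finset.Icc 1 (min a b),
        (Nat.choose (t - 1 - i) (a - i) * Nat.choose (t - 1 - i) (b - i) : ℤ) := by
  rcases Nat.eq_zero_or_pos a with rfl | ha1
  · simp
  rcases Nat.eq_zero_or_pos b with rfl | hb1
  · simp
  obtain ⟨A, rfl⟩ : ∃ A, a = A + 1 := ⟨a - 1, by omega⟩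
  obtain ⟨B, rfl⟩ : ∃ B, b = B + 1 := ⟨b - 1, by omega⟩
  have hL : (∑ i ∈ Finset.Icc 1 (A+1), ∑ j ∈ Finset.Icc 1 (B+1),
        (-1 : ℤ) ^ (i + j) * Nat.choose (A+1 - i + (B+1 - j)) (A+1 - i) *
          Nat.choose (t - 1) (i - 1) * Nat.choose (t - 1) (j - 1) *
            (-1 : ℤ) ^ (A+1 + (B+1))) = Fs (t-1) A B := by
    rw [key_rev (A+1)]
    rw [Fs]
    refine Finset.sum_congr rfl fun i hi => ?_
    rw [key_rev (B+1)]
    refine Finset.sum_congr rfl fun j hj => ?_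
    have hi' := Finset.mem_range.mp hi
    have hj' := Finset.mem_range.mp hj
    have e1 : A + 1 - (A + 1 - i) = i := by omega
    have e2 : B + 1 - (B + 1 - j) = j := by omega
    have e3 : A + 1 - i - 1 = A - i := by omega
    have e4 : B + 1 - j - 1 = B - j := by omega
    rw [e1, e2, e3, e4]
    have e5 : (A + 1 - i) + (B + 1 - j) + (A + 1 + (B + 1))
        = (i + j) + 2 * ((A + 1 - i) + (B + 1 - j)) := by omega
    have e6 : (-1:ℤ)^((A+1-i)+(B+1-j)) * (-1:ℤ)^(A+1+(B+1)) = (-1:ℤ)^(i+j) := by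
      rw [← pow_add, e5, pow_add, pow_mul]
      norm_num
    rw [← e6]
    ring
  rw [hL]
  have hmin : min (A+1) (B+1) = min A B + 1 := by omega
  rw [hmin, key_fwd (min A B + 1)]
  have hR : (∑ k ∈ range (min A B + 1),
        (Nat.choose (t - 1 - (1 + k)) (A + 1 - (1 + k)) *
          Nat.choose (t - 1 - (1 + k)) (B + 1 - (1 + k)) : ℤ)) = Gs (t-1) A B := by
    rw [Gs]
    refine Finset.sum_congr rfl fun k hk => ?_
    have e1 : t - 1 - (1 + k) = t - 1 - 1 - k := by omega
    have e2 : A + 1 - (1 + k) = A - k := by omega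
    have e3 : B + 1 - (1 + k) = B - k := by omega
    rw [e1, e2, e3]
  rw [hR]
  exact FG (A + B) A B (t-1) le_rfl (by omega) (by omega)
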